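/- With D₋₂, …, D₂ the 3×3 matrices from the previous context, for every unit vector P̂ ∈ ℂ³, one has min over unit vectors y ∈ ℂ³ of max_{−2 ≤ m ≤ 2} |yᵀ D_m P̂| > 0. -/

import Mathlib

open Real Complex Matrix

/-- `N⁽⁻¹⁾, N⁽⁰⁾, N⁽¹⁾`: the explicit `3×5` complex matrices of the paper,
indexed here by `Fin 3` (index `h` corresponds to `N⁽ʰ⁻¹⁾`). -/
noncomputable def Nmat : Fin 3 → Matrix (Fin 3) (Fin 5) ℂ :=
  ![!![((3 * Real.sqrt 5 / 5 : ℝ) : ℂ), 0, -((Real.sqrt 30 / 10 : ℝ) : ℂ), 0, 0;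
      ((3 * Real.sqrt 5 / 5 : ℝ) : ℂ) * Complex.I, 0,
        ((Real.sqrt 30 / 10 : ℝ) : ℂ) * Complex.I, 0, 0;
      0, ((3 * Real.sqrt 5 / 5 : ℝ) : ℂ), 0, 0, 0],
    !![0, ((3 * Real.sqrt 10 / 10 : ℝ) : ℂ), 0, -((3 * Real.sqrt 10 / 10 : ℝ) : ℂ), 0;
      0, ((3 * Real.sqrt 10 / 10 : ℝ) : ℂ) * Complex.I, 0,
        ((3 * Real.sqrt 10 / 10 : ℝ) : ℂ) * Complex.I, 0;
      0, 0, ((2 * Real.sqrt 15 / 5 : ℝ) : ℂ), 0, 0],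
    !![0, 0, ((Real.sqrt 30 / 10 : ℝ) : ℂ), 0, -((3 * Real.sqrt 5 / 5 : ℝ) : ℂ);
      0, 0, ((Real.sqrt 30 / 10 : ℝ) : ℂ) * Complex.I, 0,
        ((3 * Real.sqrt 5 / 5 : ℝ) : ℂ) * Complex.I;
      0, 0, 0, ((3 * Real.sqrt 5 / 5 : ℝ) : ℂ), 0]]

/-- The `3×3` matrices `D_m` (`m = -2,…,2`, indexed here by `Fin 5`):
`(D_m)_{ij} = n^{(i-2)}_{j, m+3}`. -/
noncomputable def Dmat (m : Fin 5) : Matrix (Fin 3) (Fin 3) ℂ :=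
  Matrix.of fun i j => Nmat i j m

set_option linter.unnecessarySimpa false

/-- Auxiliary: if `yᵀ D_m P = 0` for all `m` and `P ≠ 0`, then `y = 0`. -/
lemma dmat_key (P : EuclideanSpace ℂ (Fin 3)) (hP : P ≠ 0) (y : EuclideanSpace ℂ (Fin 3))
    (h : ∀ m, ∑ i : Fin 3, y i * (Dmat m).mulVec P i = 0) : y = 0 := by
  have h0 := h 0
  have h1 := h 1
  have h2 := h 2
  have h3 := h 3
  have h4 := h 4
  simp only [Dmat, Nmat, Matrix.mulVec, dotProduct, Fin.sum_univ_three,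
    Matrix.of_apply, Matrix.cons_val', Matrix.cons_val_zero, Matrix.cons_val_one,
    Matrix.head_cons, Matrix.empty_val', Matrix.cons_val_fin_one, Matrix.head_fin_const,
    Matrix.cons_val_two, Matrix.tail_cons, Matrix.cons_val_three, Matrix.cons_val_four,
    Matrix.vecHead, Matrix.vecTail, Function.comp, zero_mul, mul_zero, add_zero, zero_add,
    Matrix.cons_val_succ] at h0 h1 h2 h3 h4
  push_cast at h0 h1 h2 h3 h4
  -- constants
  have s5 : (0:ℝ) < Real.sqrt 5 := Real.sqrt_pos.mpr (by norm_num)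
  have s10 : (0:ℝ) < Real.sqrt 10 := Real.sqrt_pos.mpr (by norm_num)
  have s15 : (0:ℝ) < Real.sqrt 15 := Real.sqrt_pos.mpr (by norm_num)
  have s30 : (0:ℝ) < Real.sqrt 30 := Real.sqrt_pos.mpr (by norm_num)
  have z5 : ((Real.sqrt 5 : ℝ) : ℂ) ≠ 0 := Complex.ofReal_ne_zero.mpr (ne_of_gt s5)
  have z10 : ((Real.sqrt 10 : ℝ) : ℂ) ≠ 0 := Complex.ofReal_ne_zero.mpr (ne_of_gt s10)
  have z15 : ((Real.sqrt 15 : ℝ) : ℂ) ≠ 0 := Complex.ofReal_ne_zero.mpr (ne_of_gt s15)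
  have z30 : ((Real.sqrt 30 : ℝ) : ℂ) ≠ 0 := Complex.ofReal_ne_zero.mpr (ne_of_gt s30)
  have hc1 : (3 * ((Real.sqrt 5 : ℝ) : ℂ) / 5) ≠ 0 :=
    div_ne_zero (mul_ne_zero (by norm_num) z5) (by norm_num)
  have hc2 : (((Real.sqrt 30 : ℝ) : ℂ) / 10) ≠ 0 := div_ne_zero z30 (by norm_num)
  have hc3 : (3 * ((Real.sqrt 10 : ℝ) : ℂ) / 10) ≠ 0 :=
    div_ne_zero (mul_ne_zero (by norm_num) z10) (by norm_num)
  have hc4 : (2 * ((Real.sqrt 15 : ℝ) : ℂ) / 5) ≠ 0 :=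
    div_ne_zero (mul_ne_zero (by norm_num) z15) (by norm_num)
  set u : ℂ := P 0 + Complex.I * P 1 with hu_def
  set v : ℂ := Complex.I * P 1 - P 0 with hv_def
  have e0 : y 0 * u = 0 := by
    have : (3 * ((Real.sqrt 5 : ℝ) : ℂ) / 5) * (y 0 * u) = 0 := by
      rw [hu_def]; linear_combination h0
    exact (mul_eq_zero.mp this).resolve_left hc1
  have e1 : (3 * ((Real.sqrt 5 : ℝ) : ℂ) / 5) * (y 0 * P 2)
      + (3 * ((Real.sqrt 10 : ℝ) : ℂ) / 10) * (y 1 * u) = 0 := by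
    rw [hu_def]; linear_combination h1
  have e2 : (((Real.sqrt 30 : ℝ) : ℂ) / 10) * (y 0 * v)
      + (2 * ((Real.sqrt 15 : ℝ) : ℂ) / 5) * (y 1 * P 2)
      + (((Real.sqrt 30 : ℝ) : ℂ) / 10) * (y 2 * u) = 0 := by
    rw [hu_def, hv_def]; linear_combination h2
  have e3 : (3 * ((Real.sqrt 10 : ℝ) : ℂ) / 10) * (y 1 * v)
      + (3 * ((Real.sqrt 5 : ℝ) : ℂ) / 5) * (y 2 * P 2) = 0 := by
    rw [hv_def]; linear_combination h3
  have e4 : y 2 * v = 0 := by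
    have : (3 * ((Real.sqrt 5 : ℝ) : ℂ) / 5) * (y 2 * v) = 0 := by
      rw [hv_def]; linear_combination h4
    exact (mul_eq_zero.mp this).resolve_left hc1
  -- final: y components zero
  have hy : y 0 = 0 ∧ y 1 = 0 ∧ y 2 = 0 := by
    by_cases hu : u ≠ 0
    · have y0 : y 0 = 0 := (mul_eq_zero.mp e0).resolve_right hu
      have y1 : y 1 = 0 := by
        have : (3 * ((Real.sqrt 10 : ℝ) : ℂ) / 10) * (y 1 * u) = 0 := by
          linear_combination e1 - (3 * ((Real.sqrt 5 : ℝ) : ℂ) / 5) * P 2 * y0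
        have := (mul_eq_zero.mp this).resolve_left hc3
        exact (mul_eq_zero.mp this).resolve_right hu
      have y2 : y 2 = 0 := by
        have : (((Real.sqrt 30 : ℝ) : ℂ) / 10) * (y 2 * u) = 0 := by
          linear_combination e2 - (((Real.sqrt 30 : ℝ) : ℂ) / 10) * v * y0
            - (2 * ((Real.sqrt 15 : ℝ) : ℂ) / 5) * P 2 * y1
        have := (mul_eq_zero.mp this).resolve_left hc2
        exact (mul_eq_zero.mp this).resolve_right hu
      exact ⟨y0, y1, y2⟩
    · push_neg at hu
      by_cases hv : v ≠ 0
      · have y2 : y 2 = 0 := (mul_eq_zero.mp e4).resolve_right hv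
        have y1 : y 1 = 0 := by
          have : (3 * ((Real.sqrt 10 : ℝ) : ℂ) / 10) * (y 1 * v) = 0 := by
            linear_combination e3 - (3 * ((Real.sqrt 5 : ℝ) : ℂ) / 5) * P 2 * y2
          have := (mul_eq_zero.mp this).resolve_left hc3
          exact (mul_eq_zero.mp this).resolve_right hv
        have y0 : y 0 = 0 := by
          have : (((Real.sqrt 30 : ℝ) : ℂ) / 10) * (y 0 * v) = 0 := by
            linear_combination e2 - (2 * ((Real.sqrt 15 : ℝ) : ℂ) / 5) * P 2 * y1
              - (((Real.sqrt 30 : ℝ) : ℂ) / 10) * u * y2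
          have := (mul_eq_zero.mp this).resolve_left hc2
          exact (mul_eq_zero.mp this).resolve_right hv
        exact ⟨y0, y1, y2⟩
      · push_neg at hv
        -- u = v = 0 ⇒ P 0 = P 1 = 0, so P 2 ≠ 0
        have hP0 : P 0 = 0 := by
          have : (2 : ℂ) * P 0 = 0 := by
            rw [hu_def] at hu; rw [hv_def] at hv; linear_combination hu - hv
          simpa using this
        have hP1 : P 1 = 0 := by
          have h2' : (2 : ℂ) * (Complex.I * P 1) = 0 := by
            rw [hu_def] at hu; rw [hv_def] at hv; linear_combination hu + hv
          simpa [Complex.I_ne_zero] using h2'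
        have hP2 : P 2 ≠ 0 := by
          intro hP2
          apply hP
          ext i
          fin_cases i <;> simpa [hP0, hP1, hP2]
        have y0 : y 0 = 0 := by
          have : (3 * ((Real.sqrt 5 : ℝ) : ℂ) / 5) * (y 0 * P 2) = 0 := by
            linear_combination e1 - (3 * ((Real.sqrt 10 : ℝ) : ℂ) / 10) * y 1 * hu
          have := (mul_eq_zero.mp this).resolve_left hc1
          exact (mul_eq_zero.mp this).resolve_right hP2
        have y1 : y 1 = 0 := by
          have : (2 * ((Real.sqrt 15 : ℝ) : ℂ) / 5) * (y 1 * P 2) = 0 := by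
            linear_combination e2 - (((Real.sqrt 30 : ℝ) : ℂ) / 10) * y 0 * hv
              - (((Real.sqrt 30 : ℝ) : ℂ) / 10) * y 2 * hu
          have := (mul_eq_zero.mp this).resolve_left hc4
          exact (mul_eq_zero.mp this).resolve_right hP2
        have y2 : y 2 = 0 := by
          have : (3 * ((Real.sqrt 5 : ℝ) : ℂ) / 5) * (y 2 * P 2) = 0 := by
            linear_combination e3 - (3 * ((Real.sqrt 10 : ℝ) : ℂ) / 10) * y 1 * hv
          have := (mul_eq_zero.mp this).resolve_left hc1
          exact (mul_eq_zero.mp this).resolve_right hP2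
        exact ⟨y0, y1, y2⟩
  obtain ⟨y0, y1, y2⟩ := hy
  ext i
  fin_cases i <;> simpa [y0, y1, y2]

/-- Auxiliary continuous function: the sum of the five moduli. -/
noncomputable def Gfun (P y : EuclideanSpace ℂ (Fin 3)) : ℝ :=
  ∑ m : Fin 5, ‖(∑ i : Fin 3, y i * (Dmat m).mulVec P i)‖

lemma Gfun_continuous (P : EuclideanSpace ℂ (Fin 3)) : Continuous (Gfun P) := by
  apply continuous_finset_sum; intro m _
  apply continuous_norm.comp
  apply continuous_finset_sum; intro i _
  exact ((EuclideanSpace.proj i : EuclideanSpace ℂ (Fin 3) →L[ℂ] ℂ).continuous).mul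
    continuous_const

lemma Gfun_pos (P : EuclideanSpace ℂ (Fin 3)) (hP : P ≠ 0)
    (y : EuclideanSpace ℂ (Fin 3)) (hy : ‖y‖ = 1) : 0 < Gfun P y := by
  rcases lt_or_ge 0 (Gfun P y) with h | h
  · exact h
  · exfalso
    have hnn : ∀ m ∈ (Finset.univ : Finset (Fin 5)), 0 ≤
        ‖(∑ i : Fin 3, y i * (Dmat m).mulVec P i)‖ :=
      fun m _ => norm_nonneg _
    have hz : Gfun P y = 0 := le_antisymm h (Finset.sum_nonneg hnn)
    have hall : ∀ m : Fin 5, ∑ i : Fin 3, y i * (Dmat m).mulVec P i = 0 := by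
      intro m
      have := (Finset.sum_eq_zero_iff_of_nonneg hnn).mp hz m (Finset.mem_univ m)
      simpa using this
    have := dmat_key P hP y hall
    rw [this] at hy
    simp at hy

/-- For every unit vector `P̂ ∈ ℂ³`,
`min_{‖y‖=1} max_{-2 ≤ m ≤ 2} |yᵀ D_m P̂| > 0`. -/
theorem inf_sup_bilinear_pos (P : EuclideanSpace ℂ (Fin 3)) (hP : ‖P‖ = 1) :
    0 < ⨅ y : {y : EuclideanSpace ℂ (Fin 3) // ‖y‖ = 1},
          ⨆ m : Fin 5, ‖(∑ i : Fin 3, y.1 i * (Dmat m).mulVec P i)‖ := by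
  have hPne : P ≠ 0 := by
    intro h; rw [h] at hP; simp at hP
  have hsph : IsCompact {y : EuclideanSpace ℂ (Fin 3) | ‖y‖ = 1} := by
    have h : {y : EuclideanSpace ℂ (Fin 3) | ‖y‖ = 1}
        = Metric.sphere (0 : EuclideanSpace ℂ (Fin 3)) 1 := by ext y; simp
    rw [h]; exact isCompact_sphere 0 1
  haveI : CompactSpace {y : EuclideanSpace ℂ (Fin 3) // ‖y‖ = 1} :=
    isCompact_iff_compactSpace.mp hsph
  haveI : Nonempty {y : EuclideanSpace ℂ (Fin 3) // ‖y‖ = 1} :=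
    ⟨⟨EuclideanSpace.single 0 1, by simp [EuclideanSpace.norm_single]⟩⟩
  obtain ⟨y₀, -, hmin⟩ := isCompact_univ.exists_isMinOn Set.univ_nonempty
    (((Gfun_continuous P).comp continuous_subtype_val).continuousOn :
      ContinuousOn (fun y : {y : EuclideanSpace ℂ (Fin 3) // ‖y‖ = 1} => Gfun P y.1) _)
  have hδ : 0 < Gfun P y₀.1 := Gfun_pos P hPne y₀.1 y₀.2
  have key : ∀ y : {y : EuclideanSpace ℂ (Fin 3) // ‖y‖ = 1},
      Gfun P y₀.1 / 5 ≤
        ⨆ m : Fin 5, ‖(∑ i : Fin 3, y.1 i * (Dmat m).mulVec P i)‖ := by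
    intro y
    have hbd : BddAbove (Set.range fun m : Fin 5 =>
        ‖(∑ i : Fin 3, y.1 i * (Dmat m).mulVec P i)‖) :=
      (Set.finite_range _).bddAbove
    have hsum : Gfun P y.1 ≤ 5 * ⨆ m : Fin 5,
        ‖(∑ i : Fin 3, y.1 i * (Dmat m).mulVec P i)‖ := by
      have h1 : Gfun P y.1 ≤ ∑ _m : Fin 5, ⨆ m : Fin 5,
          ‖(∑ i : Fin 3, y.1 i * (Dmat m).mulVec P i)‖ :=
        Finset.sum_le_sum fun m _ => le_ciSup hbd m
      simpa [Finset.sum_const, mul_comm] using h1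
    have h2 : Gfun P y₀.1 ≤ Gfun P y.1 := hmin (Set.mem_univ y)
    linarith
  exact lt_of_lt_of_le (by linarith : (0:ℝ) < Gfun P y₀.1 / 5) (le_ciInf key)
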